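/- Let n : [0,∞) → [0,∞) be a non-decreasing function with n(t) = 0 for t near 0, and define N(r) = ∫₀^r n(t)/t dt. If d·N(r) = C·r^d + o(r^d) as r → ∞ for some constants C ≥ 0 and d > 0, then n(r) = C·r^d + o(r^d) as r → ∞. -/

import Mathlib

open Filter Topology MeasureTheory Asymptotics

private lemma stmt2_expub (s : ℝ) (h0 : 0 ≤ s) (h1 : s ≤ 1/2) :
    Real.exp s ≤ 1 + s + 2*s^2 := by
  have h2 : 1 - s ≤ Real.exp (-s) := by linarith [Real.add_one_le_exp (-s)]
  have h3 : Real.exp (-s) * Real.exp s = 1 := by rw [← Real.exp_add]; simp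
  nlinarith [Real.exp_pos s, Real.exp_pos (-s)]

private lemma stmt2_expdb (s : ℝ) (h0 : 0 ≤ s) : Real.exp (-s) ≤ 1 - s + s^2 := by
  have h2 : 1 + s ≤ Real.exp s := by linarith [Real.add_one_le_exp s]
  have h3 : Real.exp (-s) * Real.exp s = 1 := by rw [← Real.exp_add]; simp
  nlinarith [Real.exp_pos s, Real.exp_pos (-s)]

private lemma stmt2_aux_up (C c s η E : ℝ) (hC : 0 ≤ C) (hc : 0 < c) (hs0 : 0 < s)
    (hs : s ≤ 1/2) (hη0 : 0 < η) (hη1 : η ≤ 1) (hη2 : η ≤ c*s/8)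
    (hsC : (C+1)*s ≤ c/8) (hE : E ≤ 1 + s + 2*s^2) :
    (C + η) * E - C + η ≤ (C + c) * s := by
  have T1 : (C+η)*E ≤ (C+η)*(1+s+2*s^2) := mul_le_mul_of_nonneg_left hE (by linarith)
  have T2 : (C+1)*s*s ≤ (c/8)*s := mul_le_mul_of_nonneg_right hsC hs0.le
  have T3 : η*s ≤ (c*s/8)*s := mul_le_mul_of_nonneg_right hη2 hs0.le
  have T4 : c*s*s ≤ c*s*(1/2) := mul_le_mul_of_nonneg_left hs (by positivity)
  nlinarith [sq_nonneg s, mul_nonneg (by linarith : (0:ℝ) ≤ 1 - η) (sq_nonneg s)]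

private lemma stmt2_aux_dn (C c s η E : ℝ) (hC : 0 ≤ C) (hc : 0 < c) (hs0 : 0 < s)
    (hs : s ≤ 1/2) (hη0 : 0 < η) (hη1 : η ≤ 1) (hη2 : η ≤ c*s/8)
    (hsC : (C+1)*s ≤ c/8) (hE : E ≤ 1 - s + s^2) :
    (C - c) * s ≤ (C - η) - (C + η) * E := by
  have T1 : (C+η)*E ≤ (C+η)*(1-s+s^2) := mul_le_mul_of_nonneg_left hE (by linarith)
  have T2 : (C+1)*s*s ≤ (c/8)*s := mul_le_mul_of_nonneg_right hsC hs0.le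
  nlinarith [sq_nonneg s, mul_nonneg (by linarith : (0:ℝ) ≤ 1 - η) (sq_nonneg s),
    mul_nonneg hη0.le hs0.le]

set_option maxHeartbeats 1000000 in
/-- Tauberian direction: if `n` is non-decreasing, nonnegative, vanishes near `0`, and
`d·N(r) = C r^d + o(r^d)` where `N(r) = ∫₀^r n(t)/t dt`, then `n(r) = C r^d + o(r^d)`. -/
theorem stmt2 (n : ℝ → ℝ) (C d : ℝ) (hC : 0 ≤ C) (hd : 0 < d)
    (hpos : ∀ t, 0 ≤ n t) (hmono : MonotoneOn n (Set.Ici 0))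
    (hzero : ∃ ε > 0, ∀ t ∈ Set.Icc (0:ℝ) ε, n t = 0)
    (hN : (fun r => d * (∫ t in (0:ℝ)..r, n t / t) - C * r ^ d) =o[atTop] fun r => r ^ d) :
    (fun r => n r - C * r ^ d) =o[atTop] fun r => r ^ d := by
  obtain ⟨ε, hε, hεz⟩ := hzero
  set f : ℝ → ℝ := fun t => n t / t with hf_def
  -- integrability on [a,b] with 0 < a ≤ b
  have hintpos : ∀ a b : ℝ, 0 < a → a ≤ b → IntervalIntegrable f volume a b := by
    intro a b ha hab
    have huicc : Set.uIcc a b = Set.Icc a b := Set.uIcc_of_le hab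
    have h1 : IntervalIntegrable n volume a b := by
      apply MonotoneOn.intervalIntegrable
      rw [huicc]
      exact hmono.mono (fun x hx => le_trans ha.le hx.1)
    have h2 : ContinuousOn (fun t : ℝ => t⁻¹) (Set.uIcc a b) := by
      apply ContinuousOn.inv₀ continuousOn_id
      intro x hx
      rw [huicc] at hx
      exact ne_of_gt (lt_of_lt_of_le ha hx.1)
    have h3 := h1.mul_continuousOn h2
    simpa [hf_def, div_eq_mul_inv] using h3
  -- integrability on [0,b]
  have hint0 : ∀ b : ℝ, 0 ≤ b → IntervalIntegrable f volume 0 b := by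
    intro b hb
    have hz : IntervalIntegrable f volume 0 (min ε b) := by
      rw [intervalIntegrable_iff]
      apply MeasureTheory.integrableOn_zero.congr_fun _ measurableSet_uIoc
      intro t ht
      rw [Set.uIoc_of_le (le_min hε.le hb)] at ht
      have hnt : n t = 0 := hεz t ⟨ht.1.le, le_trans ht.2 (min_le_left _ _)⟩
      simp [hf_def, hnt]
    rcases le_or_gt b ε with h | h
    · rw [min_eq_right h] at hz; exact hz
    · rw [min_eq_left h.le] at hz
      exact hz.trans (hintpos ε b hε h.le)
  -- ∫ f over a..b equals difference of N
  have hsplit : ∀ a b : ℝ, 0 < a → a ≤ b →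
      (∫ t in a..b, f t) = (∫ t in (0:ℝ)..b, f t) - ∫ t in (0:ℝ)..a, f t := by
    intro a b ha hab
    have := intervalIntegral.integral_add_adjacent_intervals
      (hint0 a ha.le) (hintpos a b ha hab)
    linarith
  -- lower bound on the slice integral
  have key_low : ∀ a b : ℝ, 0 < a → a ≤ b →
      n a * Real.log (b / a) ≤ ∫ t in a..b, f t := by
    intro a b ha hab
    have hb : 0 < b := lt_of_lt_of_le ha hab
    have hconst : (∫ t in a..b, n a / t) = n a * Real.log (b / a) := by
      simp only [div_eq_mul_inv]
      rw [intervalIntegral.integral_const_mul, integral_inv_of_pos ha hb]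
      rw [div_eq_mul_inv]
    rw [← hconst]
    apply intervalIntegral.integral_mono_on hab _ (hintpos a b ha hab)
    · intro t ht
      have ht0 : 0 < t := lt_of_lt_of_le ha ht.1
      have hn : n a ≤ n t := hmono (le_of_lt ha) (le_of_lt ht0) ht.1
      show n a / t ≤ n t / t
      gcongr
    · apply ContinuousOn.intervalIntegrable
      apply ContinuousOn.div continuousOn_const continuousOn_id
      intro x hx
      rw [Set.uIcc_of_le hab] at hx
      exact ne_of_gt (lt_of_lt_of_le ha hx.1)
  -- upper bound on the slice integral
  have key_high : ∀ a b : ℝ, 0 < a → a ≤ b →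
      (∫ t in a..b, f t) ≤ n b * Real.log (b / a) := by
    intro a b ha hab
    have hb : 0 < b := lt_of_lt_of_le ha hab
    have hconst : (∫ t in a..b, n b / t) = n b * Real.log (b / a) := by
      simp only [div_eq_mul_inv]
      rw [intervalIntegral.integral_const_mul, integral_inv_of_pos ha hb]
      rw [div_eq_mul_inv]
    rw [← hconst]
    apply intervalIntegral.integral_mono_on hab (hintpos a b ha hab)
    · apply ContinuousOn.intervalIntegrable
      apply ContinuousOn.div continuousOn_const continuousOn_id
      intro x hx
      rw [Set.uIcc_of_le hab] at hx
      exact ne_of_gt (lt_of_lt_of_le ha hx.1)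
    · intro t ht
      have ht0 : 0 < t := lt_of_lt_of_le ha ht.1
      have hn : n t ≤ n b := hmono (le_of_lt ht0) (le_of_lt hb) ht.2
      show n t / t ≤ n b / t
      gcongr
  rw [isLittleO_iff] at hN ⊢
  intro c hc
  set s : ℝ := min (1/2) (c / (8 * (C + 1))) with hs_def
  have hs0 : 0 < s := lt_min (by norm_num) (by positivity)
  have hs_half : s ≤ 1/2 := min_le_left _ _
  have hC1 : (0:ℝ) < C + 1 := by linarith
  have hsC : (C + 1) * s ≤ c / 8 := by
    have h := min_le_right (1/2 : ℝ) (c / (8 * (C + 1)))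
    calc (C+1) * s ≤ (C+1) * (c / (8*(C+1))) := mul_le_mul_of_nonneg_left h hC1.le
      _ = c / 8 := by field_simp
  set η : ℝ := min 1 (c * s / 8) with hη_def
  have hη0 : 0 < η := lt_min one_pos (by positivity)
  have hη1 : η ≤ 1 := min_le_left _ _
  have hη2 : η ≤ c * s / 8 := min_le_right _ _
  set lam : ℝ := Real.exp (s / d) with hlam_def
  have hlam0 : 0 < lam := Real.exp_pos _
  have hlam1 : 1 < lam := by
    rw [hlam_def]
    calc (1:ℝ) = Real.exp 0 := by simp
      _ < Real.exp (s/d) := Real.exp_lt_exp.mpr (div_pos hs0 hd)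
  have hlamd : lam ^ d = Real.exp s := by
    rw [Real.rpow_def_of_pos hlam0, hlam_def, Real.log_exp, div_mul_cancel₀ _ hd.ne']
  have hscal_up : (C + η) * Real.exp s - C + η ≤ (C + c) * s :=
    stmt2_aux_up C c s η _ hC hc hs0 hs_half hη0 hη1 hη2 hsC
      (stmt2_expub s hs0.le hs_half)
  have hscal_dn : (C - c) * s ≤ (C - η) - (C + η) * Real.exp (-s) :=
    stmt2_aux_dn C c s η _ hC hc hs0 hs_half hη0 hη1 hη2 hsC (stmt2_expdb s hs0.le)
  -- eventual bounds
  have hE := hN hη0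
  have h1 : Tendsto (fun r : ℝ => lam * r) atTop atTop :=
    Tendsto.const_mul_atTop hlam0 tendsto_id
  have h2 : Tendsto (fun r : ℝ => r / lam) atTop atTop :=
    Tendsto.atTop_div_const hlam0 tendsto_id
  filter_upwards [hE, h1.eventually hE, h2.eventually hE, eventually_gt_atTop 0]
    with r hr hrl hrd hr0
  simp only [Real.norm_eq_abs] at hr hrl hrd ⊢
  have hX : 0 < r ^ d := Real.rpow_pos_of_pos hr0 d
  set X : ℝ := r ^ d with hX_def
  set Nr : ℝ := ∫ t in (0:ℝ)..r, f t with hNr_def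
  set NL : ℝ := ∫ t in (0:ℝ)..(lam*r), f t with hNL_def
  set ND : ℝ := ∫ t in (0:ℝ)..(r/lam), f t with hND_def
  have h_lr : (lam * r) ^ d = Real.exp s * X := by
    rw [Real.mul_rpow hlam0.le hr0.le, hlamd, hX_def]
  have h_rd : (r / lam) ^ d = Real.exp (-s) * X := by
    rw [Real.div_rpow hr0.le hlam0.le, hlamd, Real.exp_neg, hX_def, div_eq_mul_inv]
    ring
  rw [h_lr] at hrl
  rw [h_rd] at hrd
  rw [abs_of_pos hX] at hr
  rw [abs_of_pos (by positivity : (0:ℝ) < Real.exp s * X)] at hrl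
  rw [abs_of_pos (by positivity : (0:ℝ) < Real.exp (-s) * X)] at hrd
  obtain ⟨hr1, hr2⟩ := abs_le.mp hr
  obtain ⟨hrl1, hrl2⟩ := abs_le.mp hrl
  obtain ⟨hrd1, hrd2⟩ := abs_le.mp hrd
  -- key monotonicity inequalities
  have hrle : r ≤ lam * r := le_mul_of_one_le_left hr0.le hlam1.le
  have hdl : 0 < r / lam := div_pos hr0 hlam0
  have hdle : r / lam ≤ r := div_le_self hr0.le hlam1.le
  have hA1 : n r * (s / d) ≤ NL - Nr := by
    have h := key_low r (lam*r) hr0 hrle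
    rw [hsplit r (lam*r) hr0 hrle] at h
    have hlog : Real.log (lam * r / r) = s / d := by
      rw [mul_div_assoc, div_self hr0.ne', mul_one, hlam_def, Real.log_exp]
    rwa [hlog] at h
  have hA2 : Nr - ND ≤ n r * (s / d) := by
    have h := key_high (r/lam) r hdl hdle
    rw [hsplit (r/lam) r hdl hdle] at h
    have hq : r / (r / lam) = lam := by
      field_simp
    rwa [hq, hlam_def, Real.log_exp, ← hlam_def] at h
  have hB1 : n r * s ≤ d * NL - d * Nr := by
    have h := mul_le_mul_of_nonneg_right hA1 hd.le
    calc n r * s = n r * (s / d) * d := by field_simp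
      _ ≤ (NL - Nr) * d := h
      _ = d * NL - d * Nr := by ring
  have hB2 : d * Nr - d * ND ≤ n r * s := by
    have h := mul_le_mul_of_nonneg_right hA2 hd.le
    calc d * Nr - d * ND = (Nr - ND) * d := by ring
      _ ≤ n r * (s / d) * d := h
      _ = n r * s := by field_simp
  -- combine
  have hup : n r * s ≤ ((C + c) * s) * X := by
    have hmul := mul_le_mul_of_nonneg_right hscal_up hX.le
    linarith only [hB1, hrl2, hr1, hmul]
  have hdn : ((C - c) * s) * X ≤ n r * s := by
    have hmul := mul_le_mul_of_nonneg_right hscal_dn hX.le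
    linarith only [hB2, hrd2, hr1, hmul]
  have hup' : n r ≤ (C + c) * X :=
    le_of_mul_le_mul_right (by linarith only [hup] : n r * s ≤ ((C + c) * X) * s) hs0
  have hdn' : (C - c) * X ≤ n r :=
    le_of_mul_le_mul_right (by linarith only [hdn] : ((C - c) * X) * s ≤ n r * s) hs0
  rw [abs_of_pos hX]
  rw [abs_le]
  constructor <;> linarith only [hup', hdn']
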